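/- The derivative of J at the behavior parameter θ_b equals T times the derivative of J_surr at θ_b; that is, J′(θ_b) = T·J_surr′(θ_b). -/

import Mathlib

lemma sum_update_step {ι X : Type} [Fintype ι] [DecidableEq ι] [Fintype X]
    (k : ι) (F : (ι → X) → ℝ) (c : (ι → X) → X → ℝ) (r : ℝ)
    (hF : ∀ f v, F (Function.update f k v) = F f)
    (hc : ∀ f v, c (Function.update f k v) = c f)
    (hsum : ∀ f, ∑ v, c f v = r) :
    (Fintype.card X : ℝ) * ∑ f : ι → X, F f * c f (f k)
      = r * ∑ f : ι → X, F f := by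
  have h1 : ∑ w : X, ∑ f : ι → X, F f * c f (f k)
      = (Fintype.card X : ℝ) * ∑ f : ι → X, F f * c f (f k) := by
    rw [Finset.sum_const, nsmul_eq_mul, Finset.card_univ]
  rw [← h1]
  have h2 : ∀ w : X, ∑ f : ι → X, F f * c f (f k)
      = ∑ f : ι → X, F (Function.update f k w) * c (Function.update f k w) (f k) :=
    fun w => Finset.sum_congr rfl fun f _ => by rw [hF, hc]
  calc ∑ w : X, ∑ f : ι → X, F f * c f (f k)
      = ∑ w : X, ∑ f : ι → X, F (Function.update f k w) * c (Function.update f k w) (f k) :=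
        Finset.sum_congr rfl fun w _ => h2 w
    _ = ∑ p : X × (ι → X), F (Function.update p.2 k p.1) * c (Function.update p.2 k p.1) (p.2 k) := by
        rw [Fintype.sum_prod_type]
    _ = ∑ p : X × (ι → X), F p.2 * c p.2 p.1 := by
        apply Fintype.sum_bijective (fun p : X × (ι → X) => (p.2 k, Function.update p.2 k p.1))
        · have hinv : Function.Involutive
              (fun p : X × (ι → X) => (p.2 k, Function.update p.2 k p.1)) := by
            intro p
            simp [Function.update_self, Function.update_idem, Function.update_eq_self]
          exact hinv.bijective
        · intro p
          simp [Function.update_self, Function.update_idem, Function.update_eq_self]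
    _ = ∑ f : ι → X, ∑ w : X, F f * c f w := by
        rw [Fintype.sum_prod_type_right]
    _ = r * ∑ f : ι → X, F f := by
        rw [Finset.mul_sum]
        exact Finset.sum_congr rfl fun f _ => by rw [← Finset.mul_sum, hsum, mul_comm]

lemma traj_zero {S A : Type} [Fintype S] [Fintype A] {T : ℕ}
    (P : S → S → A → ℝ) (hP1 : ∀ s a, ∑ s', P s' s a = 1)
    (c : Fin T → S → A → ℝ) (t : Fin T)
    (hc1 : ∀ u : Fin T, u ≠ t → ∀ s, ∑ a, c u s a = 1)
    (hct : ∀ s, ∑ a, c t s a = 0)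
    (ht : 1 ≤ (t : ℕ))
    (base : (Fin T → S × A) → ℝ)
    (hbase : ∀ (f : Fin T → S × A) (u : Fin T), (t:ℕ) ≤ (u:ℕ) → ∀ v,
      base (Function.update f u v) = base f) :
    ∑ f : Fin T → S × A, base f * (∏ u : Fin T, c u (f u).1 (f u).2)
      * (∏ u : Fin T, if h : (u:ℕ)+1 < T then P (f ⟨(u:ℕ)+1, h⟩).1 (f u).1 (f u).2 else 1)
      = 0 := by
  rcases isEmpty_or_nonempty (S × A) with hSA | hSA
  · have hne : Nonempty (Fin T) := ⟨t⟩
    have : IsEmpty (Fin T → S × A) := by infer_instance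
    rw [Finset.univ_eq_empty, Finset.sum_empty]
  have hcard : (0:ℝ) < (Fintype.card (S × A) : ℝ) := by
    exact_mod_cast Fintype.card_pos
  set E : ℕ → ℝ := fun k => ∑ f : Fin T → S × A, base f
      * (∏ u : Fin T, if (u:ℕ) < k then c u (f u).1 (f u).2 else 1)
      * (∏ u : Fin T, if h : (u:ℕ)+1 < T then
          (if (u:ℕ)+1 < k then P (f ⟨(u:ℕ)+1, h⟩).1 (f u).1 (f u).2 else 1) else 1)
    with hE
  have hstep : ∀ k : ℕ, (t:ℕ) ≤ k → k < T →
      (Fintype.card (S × A) : ℝ) * E (k+1) = (if k = (t:ℕ) then (0:ℝ) else 1) * E k := by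
    intro k hk hkT
    have hk1 : 1 ≤ k := le_trans ht hk
    set kf : Fin T := ⟨k, hkT⟩ with hkf
    set kp : Fin T := ⟨k-1, by omega⟩ with hkp
    have hkfv : (kf:ℕ) = k := rfl
    have hkpv : (kp:ℕ) = k-1 := rfl
    have hkpkf : kp ≠ kf := Fin.ne_of_val_ne (by omega)
    set F : (Fin T → S × A) → ℝ := fun f => base f
        * (∏ u : Fin T, if (u:ℕ) < k then c u (f u).1 (f u).2 else 1)
        * (∏ u : Fin T, if h : (u:ℕ)+1 < T then
            (if (u:ℕ)+1 < k then P (f ⟨(u:ℕ)+1, h⟩).1 (f u).1 (f u).2 else 1) else 1)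
      with hF
    set cc : (Fin T → S × A) → (S × A) → ℝ :=
      fun f v => c kf v.1 v.2 * P v.1 (f kp).1 (f kp).2 with hcc
    have hupd : ∀ (f : Fin T → S × A) (v : S × A) (u : Fin T), u ≠ kf →
        (Function.update f kf v) u = f u := fun f v u h => Function.update_of_ne h v f
    have hFinv : ∀ f v, F (Function.update f kf v) = F f := by
      intro f v
      simp only [hF]
      rw [hbase f kf hk v]
      congr 1
      · congr 1
        refine Finset.prod_congr rfl fun u _ => ?_
        by_cases hu : (u:ℕ) < k
        · have hne : u ≠ kf := by
            simp only [hkf, ne_eq, Fin.mk.injEq]; omega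
          rw [if_pos hu, if_pos hu, hupd f v u hne]
        · rw [if_neg hu, if_neg hu]
      · refine Finset.prod_congr rfl fun u _ => ?_
        by_cases h : (u:ℕ)+1 < T
        · rw [dif_pos h, dif_pos h]
          by_cases h2 : (u:ℕ)+1 < k
          · have hne1 : (⟨(u:ℕ)+1, h⟩ : Fin T) ≠ kf := by
              simp only [hkf, ne_eq, Fin.mk.injEq]; omega
            have hne2 : u ≠ kf := by
              simp only [hkf, ne_eq, Fin.mk.injEq]; omega
            rw [if_pos h2, if_pos h2, hupd f v _ hne1, hupd f v u hne2]
          · rw [if_neg h2, if_neg h2]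
        · rw [dif_neg h, dif_neg h]
    have hcinv : ∀ f v, cc (Function.update f kf v) = cc f := by
      intro f v
      funext w
      simp only [hcc]
      rw [hupd f v kp hkpkf]
    have hsum : ∀ f, ∑ v : S × A, cc f v = (if k = (t:ℕ) then (0:ℝ) else 1) := by
      intro f
      simp only [hcc]
      rw [Fintype.sum_prod_type]
      by_cases hkt : k = (t:ℕ)
      · have hkft : kf = t := Fin.ext hkt
        rw [if_pos hkt]
        refine Finset.sum_eq_zero fun s' _ => ?_
        show ∑ a' : A, c kf s' a' * P s' (f kp).1 (f kp).2 = 0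
        rw [← Finset.sum_mul, hkft, hct s', zero_mul]
      · have hkft : kf ≠ t := by
          simp only [hkf, ne_eq, Fin.mk.injEq]
          exact fun h => hkt (by omega)
        rw [if_neg hkt]
        have h5 : ∀ s' : S, (∑ a' : A, c kf s' a' * P s' (f kp).1 (f kp).2)
            = P s' (f kp).1 (f kp).2 := by
          intro s'
          rw [← Finset.sum_mul, hc1 kf hkft s', one_mul]
        calc (∑ s' : S, ∑ a' : A, c kf s' a' * P s' (f kp).1 (f kp).2)
            = ∑ s' : S, P s' (f kp).1 (f kp).2 := Finset.sum_congr rfl fun s' _ => h5 s'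
          _ = 1 := hP1 _ _
    have hsummand : ∀ f : Fin T → S × A, base f
        * (∏ u : Fin T, if (u:ℕ) < k+1 then c u (f u).1 (f u).2 else 1)
        * (∏ u : Fin T, if h : (u:ℕ)+1 < T then
            (if (u:ℕ)+1 < k+1 then P (f ⟨(u:ℕ)+1, h⟩).1 (f u).1 (f u).2 else 1) else 1)
        = F f * cc f (f kf) := by
      intro f
      have hPc : (∏ u : Fin T, if (u:ℕ) < k+1 then c u (f u).1 (f u).2 else 1)
          = (∏ u : Fin T, if (u:ℕ) < k then c u (f u).1 (f u).2 else 1)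
            * c kf (f kf).1 (f kf).2 := by
        have hpt : ∀ u : Fin T, (if (u:ℕ) < k+1 then c u (f u).1 (f u).2 else 1)
            = (if (u:ℕ) < k then c u (f u).1 (f u).2 else 1)
              * (if u = kf then c u (f u).1 (f u).2 else 1) := by
          intro u
          rcases eq_or_ne u kf with rfl | hu
          · have h1 : ((kf:ℕ) < k + 1) := by omega
            have h2 : ¬ ((kf:ℕ) < k) := by omega
            rw [if_pos h1, if_neg h2, if_pos rfl, one_mul]
          · have hne : (u:ℕ) ≠ k := fun h => hu (Fin.ext h)
            have h2 : ((u:ℕ) < k+1) ↔ ((u:ℕ) < k) := by omega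
            by_cases h3 : (u:ℕ) < k
            · rw [if_pos (h2.mpr h3), if_pos h3, if_neg hu, mul_one]
            · rw [if_neg (fun h => h3 (h2.mp h)), if_neg h3, if_neg hu, mul_one]
        rw [Finset.prod_congr rfl fun u _ => hpt u, Finset.prod_mul_distrib]
        congr 1
        rw [Finset.prod_ite_eq' Finset.univ kf (fun u => c u (f u).1 (f u).2)]
        simp
      have hPt : (∏ u : Fin T, if h : (u:ℕ)+1 < T then
            (if (u:ℕ)+1 < k+1 then P (f ⟨(u:ℕ)+1, h⟩).1 (f u).1 (f u).2 else 1) else 1)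
          = (∏ u : Fin T, if h : (u:ℕ)+1 < T then
              (if (u:ℕ)+1 < k then P (f ⟨(u:ℕ)+1, h⟩).1 (f u).1 (f u).2 else 1) else 1)
            * P (f kf).1 (f kp).1 (f kp).2 := by
        have hpt : ∀ u : Fin T, (if h : (u:ℕ)+1 < T then
              (if (u:ℕ)+1 < k+1 then P (f ⟨(u:ℕ)+1, h⟩).1 (f u).1 (f u).2 else 1) else 1)
            = (if h : (u:ℕ)+1 < T then
                (if (u:ℕ)+1 < k then P (f ⟨(u:ℕ)+1, h⟩).1 (f u).1 (f u).2 else 1) else 1)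
              * (if u = kp then P (f kf).1 (f u).1 (f u).2 else 1) := by
          intro u
          rcases eq_or_ne u kp with rfl | hu
          · have h1 : (kp:ℕ)+1 < T := by omega
            have hkk : (⟨(kp:ℕ)+1, h1⟩ : Fin T) = kf := Fin.ext (show (kp:ℕ)+1 = (kf:ℕ) by omega)
            rw [dif_pos h1, dif_pos h1]
            have h2 : ¬ ((kp:ℕ)+1 < k) := by omega
            have h3 : ((kp:ℕ)+1 < k+1) := by omega
            rw [if_pos h3, if_neg h2, if_pos rfl, one_mul, hkk]
          · have hne : (u:ℕ) ≠ k-1 := by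
              intro h
              exact hu (Fin.ext (by simp only [hkp]; omega))
            have h2 : ((u:ℕ)+1 < k+1) ↔ ((u:ℕ)+1 < k) := by omega
            rw [if_neg hu, mul_one]
            by_cases h : (u:ℕ)+1 < T
            · rw [dif_pos h, dif_pos h]
              by_cases h3 : (u:ℕ)+1 < k
              · rw [if_pos (h2.mpr h3), if_pos h3]
              · rw [if_neg (fun hh => h3 (h2.mp hh)), if_neg h3]
            · rw [dif_neg h, dif_neg h]
        rw [Finset.prod_congr rfl fun u _ => hpt u, Finset.prod_mul_distrib]
        congr 1
        rw [Finset.prod_ite_eq' Finset.univ kp (fun u => P (f kf).1 (f u).1 (f u).2)]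
        simp
      rw [hPc, hPt]
      simp only [hF, hcc]
      ring
    have hkey := sum_update_step kf F cc (if k = (t:ℕ) then (0:ℝ) else 1) hFinv hcinv hsum
    have hEk1 : E (k+1) = ∑ f : Fin T → S × A, F f * cc f (f kf) :=
      Finset.sum_congr rfl fun f _ => hsummand f
    have hEkF : E k = ∑ f : Fin T → S × A, F f := rfl
    rw [hEk1, hEkF]
    exact hkey
  have hzero : E ((t:ℕ)+1) = 0 := by
    have h := hstep (t:ℕ) le_rfl t.isLt
    rw [if_pos rfl, zero_mul] at h
    exact (mul_eq_zero.mp h).resolve_left (ne_of_gt hcard)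
  have hind : ∀ k : ℕ, (t:ℕ)+1 ≤ k → k ≤ T → E k = 0 := by
    intro k hk
    induction k, hk using Nat.le_induction with
    | base => intro _; exact hzero
    | succ k hk ih =>
      intro hkT
      have h1 : E k = 0 := ih (by omega)
      have h2 := hstep k (by omega) (by omega)
      rw [h1, mul_zero] at h2
      exact (mul_eq_zero.mp h2).resolve_left (ne_of_gt hcard)
  have hET : (∑ f : Fin T → S × A, base f * (∏ u : Fin T, c u (f u).1 (f u).2)
      * (∏ u : Fin T, if h : (u:ℕ)+1 < T then P (f ⟨(u:ℕ)+1, h⟩).1 (f u).1 (f u).2 else 1))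
      = E T := by
    rw [hE]
    refine Finset.sum_congr rfl fun f _ => ?_
    congr 1
    · congr 1
      refine Finset.prod_congr rfl fun u _ => ?_
      rw [if_pos u.isLt]
    · refine Finset.prod_congr rfl fun u _ => ?_
      by_cases h : (u:ℕ)+1 < T
      · rw [dif_pos h, dif_pos h, if_pos h]
      · rw [dif_neg h, dif_neg h]
  rw [hET]
  exact hind T (Nat.succ_le_of_lt t.isLt) le_rfl


noncomputable def rfun {S G : Type} [DecidableEq G] (φ : S → G) (γ : ℝ) {T : ℕ}
    (g : G) (s1 : Fin T → S) (i : Fin T) : ℝ :=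
  γ ^ (i : ℕ) * (if φ (s1 i) = g then (1 : ℝ) else 0)

noncomputable def cfun {S A G : Type} (π : ℝ → S → G → A → ℝ) (θb : ℝ) (g : G) {T : ℕ}
    (t : Fin T) (u : Fin T) (s : S) (a : A) : ℝ :=
  if u = t then deriv (fun θ => π θ s g a) θb else π θb s g a

noncomputable def basefun {S A G : Type} [DecidableEq G] (φ : S → G) (γ : ℝ) (ρ : S → ℝ)
    {T : ℕ} (hT : 1 ≤ T) (g : G) (i : Fin T) (f : Fin T → S × A) : ℝ :=
  ρ ((f ⟨0, hT⟩).1) * rfun φ γ g (fun u => (f u).1) i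

noncomputable def qfun {S A G : Type} (π : ℝ → S → G → A → ℝ) (θb : ℝ) {T : ℕ}
    (g : G) (τ : (Fin T → S) × (Fin T → A)) (t : Fin T) : ℝ :=
  deriv (fun θ => π θ (τ.1 t) g (τ.2 t)) θb / π θb (τ.1 t) g (τ.2 t)

/-- Probability of the trajectory `τ = (s_1,a_1,…,s_T,a_T)` given goal `g` under the
parameterized policy at parameter `θ`:
`P_θ(τ|g) = ρ(s_1)·Π_{t=1}^T π_θ(a_t|s_t,g)·Π_{t=1}^{T−1} P(s_{t+1}|s_t,a_t)`
(0-based indexing; the transition factor is 1 at the last step). -/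
noncomputable def Ptraj {S A G : Type} [Fintype S] [Fintype A]
    (T : ℕ) (hT : 1 ≤ T) (ρ : S → ℝ) (P : S → S → A → ℝ)
    (π : ℝ → S → G → A → ℝ) (θ : ℝ) (g : G)
    (τ : (Fin T → S) × (Fin T → A)) : ℝ :=
  ρ (τ.1 ⟨0, hT⟩) * (∏ t : Fin T, π θ (τ.1 t) g (τ.2 t)) *
    ∏ t : Fin T,
      (if h : (t : ℕ) + 1 < T then P (τ.1 ⟨(t : ℕ) + 1, h⟩) (τ.1 t) (τ.2 t) else 1)

/-- `J′(θ_b) = T·J_surr′(θ_b)`, where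
`J(θ) = Σ_g p(g)·Σ_τ P_θ(τ|g)·Σ_{i=1}^T γ^{i−1}·1[φ(s_i)=g]` and
`J_surr(θ) = (1/T)·Σ_g p(g)·Σ_τ P_{θ_b}(τ|g)·Σ_{t=1}^T log π_θ(a_t|s_t,g)·Σ_{i=t}^T γ^{i−1}·1[φ(s_i)=g]`. -/
theorem stmt11 {S A G : Type} [Fintype S] [Fintype A] [Fintype G] [DecidableEq G]
    (T : ℕ) (hT : 1 ≤ T) (φ : S → G)
    (γ : ℝ) (hγ0 : 0 < γ) (hγ1 : γ ≤ 1)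
    (p : G → ℝ) (hp0 : ∀ g, 0 ≤ p g) (hp1 : ∑ g, p g = 1)
    (ρ : S → ℝ) (hρ0 : ∀ s, 0 ≤ ρ s) (hρ1 : ∑ s, ρ s = 1)
    (P : S → S → A → ℝ) (hP0 : ∀ s' s a, 0 ≤ P s' s a)
    (hP1 : ∀ s a, ∑ s', P s' s a = 1)
    (π : ℝ → S → G → A → ℝ)
    (hπ1 : ∀ θ s g, ∑ a, π θ s g a = 1)
    (hdiff : ∀ s g a, Differentiable ℝ (fun θ => π θ s g a))
    (θb : ℝ) (hπb : ∀ s g a, 0 < π θb s g a) :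
    deriv (fun θ => ∑ g, p g * ∑ τ : (Fin T → S) × (Fin T → A),
        Ptraj T hT ρ P π θ g τ *
          ∑ i : Fin T, γ ^ (i : ℕ) * (if φ (τ.1 i) = g then (1 : ℝ) else 0)) θb
      = (T : ℝ) * deriv (fun θ => (1 / (T : ℝ)) * ∑ g, p g *
          ∑ τ : (Fin T → S) × (Fin T → A), Ptraj T hT ρ P π θb g τ *
            ∑ t : Fin T, Real.log (π θ (τ.1 t) g (τ.2 t)) *
              ∑ i ∈ Finset.Ici t, γ ^ (i : ℕ) *
                (if φ (τ.1 i) = g then (1 : ℝ) else 0)) θb := by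
  classical
  show deriv (fun θ => ∑ g, p g * ∑ τ : (Fin T → S) × (Fin T → A),
        Ptraj T hT ρ P π θ g τ * ∑ i : Fin T, rfun φ γ g τ.1 i) θb
      = (T : ℝ) * deriv (fun θ => (1 / (T : ℝ)) * ∑ g, p g *
          ∑ τ : (Fin T → S) × (Fin T → A), Ptraj T hT ρ P π θb g τ *
            ∑ t : Fin T, Real.log (π θ (τ.1 t) g (τ.2 t)) *
              ∑ i ∈ Finset.Ici t, rfun φ γ g τ.1 i) θb
  -- derivative of each trajectory probability
  have hPtraj : ∀ (g : G) (τ : (Fin T → S) × (Fin T → A)),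
      HasDerivAt (fun θ => Ptraj T hT ρ P π θ g τ)
        (Ptraj T hT ρ P π θb g τ * ∑ t : Fin T, qfun π θb g τ t) θb := by
    intro g τ
    have hprod : HasDerivAt (fun θ => ∏ t : Fin T, π θ (τ.1 t) g (τ.2 t))
        (∑ t : Fin T, (∏ u ∈ Finset.univ.erase t, π θb (τ.1 u) g (τ.2 u)) •
          deriv (fun θ => π θ (τ.1 t) g (τ.2 t)) θb) θb :=
      HasDerivAt.fun_finsetProd (fun t _ => ((hdiff (τ.1 t) g (τ.2 t)) θb).hasDerivAt)
    have hval : (∑ t : Fin T, (∏ u ∈ Finset.univ.erase t, π θb (τ.1 u) g (τ.2 u)) •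
          deriv (fun θ => π θ (τ.1 t) g (τ.2 t)) θb)
        = (∏ t : Fin T, π θb (τ.1 t) g (τ.2 t)) * ∑ t : Fin T, qfun π θb g τ t := by
      rw [Finset.mul_sum]
      refine Finset.sum_congr rfl fun t _ => ?_
      rw [smul_eq_mul, qfun]
      have hne : π θb (τ.1 t) g (τ.2 t) ≠ 0 := ne_of_gt (hπb _ _ _)
      have herase : (∏ u ∈ Finset.univ.erase t, π θb (τ.1 u) g (τ.2 u))
            * π θb (τ.1 t) g (τ.2 t)
          = ∏ u : Fin T, π θb (τ.1 u) g (τ.2 u) :=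
        Finset.prod_erase_mul _ _ (Finset.mem_univ t)
      rw [← herase, mul_assoc]
      congr 1
      rw [mul_comm, div_mul_cancel₀ _ hne]
    have h2 := (hprod.const_mul (ρ (τ.1 ⟨0, hT⟩))).mul_const
      (∏ t : Fin T, (if h : (t : ℕ) + 1 < T then P (τ.1 ⟨(t : ℕ) + 1, h⟩) (τ.1 t) (τ.2 t) else 1))
    rw [hval] at h2
    have h3 : Ptraj T hT ρ P π θb g τ * ∑ t : Fin T, qfun π θb g τ t
        = ρ (τ.1 ⟨0, hT⟩) * ((∏ t : Fin T, π θb (τ.1 t) g (τ.2 t)) * ∑ t : Fin T, qfun π θb g τ t)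
          * ∏ t : Fin T, (if h : (t : ℕ) + 1 < T then P (τ.1 ⟨(t : ℕ) + 1, h⟩) (τ.1 t) (τ.2 t) else 1) := by
      simp only [Ptraj]; ring
    rw [h3]
    exact h2
  -- derivative of the LHS
  have hL : HasDerivAt (fun θ => ∑ g, p g * ∑ τ : (Fin T → S) × (Fin T → A),
        Ptraj T hT ρ P π θ g τ * ∑ i : Fin T, rfun φ γ g τ.1 i)
      (∑ g, p g * ∑ τ : (Fin T → S) × (Fin T → A),
        (Ptraj T hT ρ P π θb g τ * ∑ t : Fin T, qfun π θb g τ t)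
          * ∑ i : Fin T, rfun φ γ g τ.1 i) θb := by
    apply HasDerivAt.fun_sum
    intro g _
    apply HasDerivAt.const_mul
    apply HasDerivAt.fun_sum
    intro τ _
    exact (hPtraj g τ).mul_const _
  -- derivative of the RHS
  have hR : HasDerivAt (fun θ => (1 / (T : ℝ)) * ∑ g, p g *
        ∑ τ : (Fin T → S) × (Fin T → A), Ptraj T hT ρ P π θb g τ *
          ∑ t : Fin T, Real.log (π θ (τ.1 t) g (τ.2 t)) * ∑ i ∈ Finset.Ici t, rfun φ γ g τ.1 i)
      ((1 / (T : ℝ)) * ∑ g, p g *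
        ∑ τ : (Fin T → S) × (Fin T → A), Ptraj T hT ρ P π θb g τ *
          ∑ t : Fin T, qfun π θb g τ t * ∑ i ∈ Finset.Ici t, rfun φ γ g τ.1 i) θb := by
    apply HasDerivAt.const_mul
    apply HasDerivAt.fun_sum
    intro g _
    apply HasDerivAt.const_mul
    apply HasDerivAt.fun_sum
    intro τ _
    apply HasDerivAt.const_mul
    apply HasDerivAt.fun_sum
    intro t _
    apply HasDerivAt.mul_const
    exact ((hdiff (τ.1 t) g (τ.2 t)) θb).hasDerivAt.log (ne_of_gt (hπb _ _ _))
  rw [hL.deriv, hR.deriv, ← mul_assoc]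
  have hT0 : (T : ℝ) ≠ 0 := Nat.cast_ne_zero.mpr (by omega)
  rw [mul_one_div_cancel hT0, one_mul]
  -- split full return at each time into reward-to-go plus past rewards
  have hsplit : ∀ (h : Fin T → ℝ) (t : Fin T),
      (∑ i : Fin T, h i) = (∑ i ∈ Finset.Ici t, h i) + ∑ i ∈ Finset.Iio t, h i := by
    intro h t
    have h1 : Finset.Ici t = Finset.univ.filter (fun i => t ≤ i) := by
      ext i; simp
    have h2 : Finset.Iio t = Finset.univ.filter (fun i => ¬ t ≤ i) := by
      ext i; simp [Finset.mem_Iio, not_le]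
    rw [h1, h2, Finset.sum_filter_add_sum_filter_not]
  -- vanishing of past-reward terms
  have hzero : ∀ (g : G) (t i : Fin T), i < t →
      (∑ τ : (Fin T → S) × (Fin T → A),
        Ptraj T hT ρ P π θb g τ * qfun π θb g τ t * rfun φ γ g τ.1 i) = 0 := by
    intro g t i hit
    have hitv : (i : ℕ) < (t : ℕ) := hit
    have hc1 : ∀ u : Fin T, u ≠ t → ∀ s, ∑ a, cfun π θb g t u s a = 1 := by
      intro u hu s
      simp only [cfun, if_neg hu]
      exact hπ1 θb s g
    have hct : ∀ s, ∑ a, cfun π θb g t t s a = 0 := by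
      intro s
      simp only [cfun, if_pos rfl]
      have hd : HasDerivAt (fun θ => ∑ a, π θ s g a)
          (∑ a, deriv (fun θ => π θ s g a) θb) θb :=
        HasDerivAt.fun_sum fun a _ => ((hdiff s g a) θb).hasDerivAt
      have he : (fun θ => ∑ a : A, π θ s g a) = fun _ => (1 : ℝ) :=
        funext fun θ => hπ1 θ s g
      rw [he] at hd
      exact hd.unique (hasDerivAt_const θb 1)
    have ht1 : 1 ≤ (t : ℕ) := by omega
    have hbase : ∀ (f : Fin T → S × A) (u : Fin T), (t : ℕ) ≤ (u : ℕ) → ∀ v,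
        basefun φ γ ρ hT g i (Function.update f u v) = basefun φ γ ρ hT g i f := by
      intro f u hu v
      have h0 : (⟨0, hT⟩ : Fin T) ≠ u := Fin.ne_of_val_ne (show (0:ℕ) ≠ (u:ℕ) by omega)
      have hi : i ≠ u := Fin.ne_of_val_ne (by omega)
      simp only [basefun, rfun, Function.update_of_ne h0, Function.update_of_ne hi]
    -- rewrite each summand
    have hsummand : ∀ τ : (Fin T → S) × (Fin T → A),
        Ptraj T hT ρ P π θb g τ * qfun π θb g τ t * rfun φ γ g τ.1 i
        = (ρ (τ.1 ⟨0, hT⟩) * rfun φ γ g τ.1 i)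
          * (∏ u : Fin T, cfun π θb g t u (τ.1 u) (τ.2 u))
          * (∏ u : Fin T, if h : (u : ℕ) + 1 < T then P (τ.1 ⟨(u : ℕ) + 1, h⟩) (τ.1 u) (τ.2 u) else 1) := by
      intro τ
      have hne : π θb (τ.1 t) g (τ.2 t) ≠ 0 := ne_of_gt (hπb _ _ _)
      have hprodc : (∏ u : Fin T, π θb (τ.1 u) g (τ.2 u)) * qfun π θb g τ t
          = ∏ u : Fin T, cfun π θb g t u (τ.1 u) (τ.2 u) := by
        have h1 : (∏ u : Fin T, cfun π θb g t u (τ.1 u) (τ.2 u))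
            = (∏ u ∈ Finset.univ.erase t, π θb (τ.1 u) g (τ.2 u))
              * deriv (fun θ => π θ (τ.1 t) g (τ.2 t)) θb := by
          rw [← Finset.prod_erase_mul Finset.univ _ (Finset.mem_univ t)]
          congr 1
          · refine Finset.prod_congr rfl fun u hu => ?_
            simp only [cfun, if_neg (Finset.ne_of_mem_erase hu)]
          · simp [cfun]
        have h2 : (∏ u : Fin T, π θb (τ.1 u) g (τ.2 u))
            = (∏ u ∈ Finset.univ.erase t, π θb (τ.1 u) g (τ.2 u)) * π θb (τ.1 t) g (τ.2 t) :=
          (Finset.prod_erase_mul _ _ (Finset.mem_univ t)).symm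
        rw [h1, h2, qfun, mul_assoc]
        congr 1
        rw [mul_comm, div_mul_cancel₀ _ hne]
      rw [← hprodc]
      simp only [Ptraj]
      ring
    rw [Finset.sum_congr rfl fun τ _ => hsummand τ]
    have hbij := Equiv.sum_comp (Equiv.arrowProdEquivProdArrow (Fin T) (fun _ => S) (fun _ => A))
      (fun τ : (Fin T → S) × (Fin T → A) =>
        (ρ (τ.1 ⟨0, hT⟩) * rfun φ γ g τ.1 i)
          * (∏ u : Fin T, cfun π θb g t u (τ.1 u) (τ.2 u))
          * (∏ u : Fin T, if h : (u : ℕ) + 1 < T then P (τ.1 ⟨(u : ℕ) + 1, h⟩) (τ.1 u) (τ.2 u) else 1))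
    rw [← hbij]
    exact traj_zero P hP1 (cfun π θb g t) t hc1 hct ht1 (basefun φ γ ρ hT g i) hbase
  -- final comparison of the two sums
  refine Finset.sum_congr rfl fun g _ => ?_
  congr 1
  have expand : ∀ τ : (Fin T → S) × (Fin T → A),
      (Ptraj T hT ρ P π θb g τ * ∑ t : Fin T, qfun π θb g τ t) * ∑ i : Fin T, rfun φ γ g τ.1 i
      = (∑ t : Fin T, Ptraj T hT ρ P π θb g τ * qfun π θb g τ t * ∑ i ∈ Finset.Ici t, rfun φ γ g τ.1 i)
        + ∑ t : Fin T, ∑ i ∈ Finset.Iio t,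
            Ptraj T hT ρ P π θb g τ * qfun π θb g τ t * rfun φ γ g τ.1 i := by
    intro τ
    have e1 : Ptraj T hT ρ P π θb g τ * ∑ t : Fin T, qfun π θb g τ t
        = ∑ t : Fin T, Ptraj T hT ρ P π θb g τ * qfun π θb g τ t := by
      rw [Finset.mul_sum]
    rw [e1, Finset.sum_mul, ← Finset.sum_add_distrib]
    refine Finset.sum_congr rfl fun t _ => ?_
    rw [hsplit (rfun φ γ g τ.1) t, mul_add]
    congr 1
    rw [Finset.mul_sum]
  calc (∑ τ : (Fin T → S) × (Fin T → A),
        (Ptraj T hT ρ P π θb g τ * ∑ t : Fin T, qfun π θb g τ t) * ∑ i : Fin T, rfun φ γ g τ.1 i)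
      = (∑ τ : (Fin T → S) × (Fin T → A),
          ∑ t : Fin T, Ptraj T hT ρ P π θb g τ * qfun π θb g τ t * ∑ i ∈ Finset.Ici t, rfun φ γ g τ.1 i)
        + ∑ τ : (Fin T → S) × (Fin T → A), ∑ t : Fin T, ∑ i ∈ Finset.Iio t,
            Ptraj T hT ρ P π θb g τ * qfun π θb g τ t * rfun φ γ g τ.1 i := by
        rw [← Finset.sum_add_distrib]
        exact Finset.sum_congr rfl fun τ _ => expand τ
    _ = (∑ τ : (Fin T → S) × (Fin T → A),
          ∑ t : Fin T, Ptraj T hT ρ P π θb g τ * qfun π θb g τ t * ∑ i ∈ Finset.Ici t, rfun φ γ g τ.1 i)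
        + 0 := by
        congr 1
        rw [Finset.sum_comm]
        refine Finset.sum_eq_zero fun t _ => ?_
        rw [Finset.sum_comm]
        refine Finset.sum_eq_zero fun i hi => ?_
        exact hzero g t i (Finset.mem_Iio.mp hi)
    _ = ∑ τ : (Fin T → S) × (Fin T → A), Ptraj T hT ρ P π θb g τ *
          ∑ t : Fin T, qfun π θb g τ t * ∑ i ∈ Finset.Ici t, rfun φ γ g τ.1 i := by
        rw [add_zero]
        refine Finset.sum_congr rfl fun τ _ => ?_
        have e2 : Ptraj T hT ρ P π θb g τ *
            (∑ t : Fin T, qfun π θb g τ t * ∑ i ∈ Finset.Ici t, rfun φ γ g τ.1 i)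
            = ∑ t : Fin T, Ptraj T hT ρ P π θb g τ *
                (qfun π θb g τ t * ∑ i ∈ Finset.Ici t, rfun φ γ g τ.1 i) := by
          rw [Finset.mul_sum]
        rw [e2]
        refine Finset.sum_congr rfl fun t _ => ?_
        ring
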